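/- With the Kreweras triangle (h_{n,k}) defined by h_{1,1} = 1, h_{n,1} = sum_{i=1}^{n-1} h_{n-1,i}, h_{n,2} = 2h_{n,1} - h_{n-1,1}, h_{n,k} = 2h_{n,k-1} - h_{n,k-2} - h_{n-1,k-1} - h_{n-1,k-2} for 3 ≤ k ≤ n, every entry h_{n,k} (n ≥ 1, 1 ≤ k ≤ n) is a positive integer. -/

import Mathlib

/-- Reflection of a weighted sum over `Icc 1 (n-1)` when the weight `g` is symmetric. -/
lemma kreweras_reflect (g f : ℕ → ℤ) (n : ℕ) (hn : 2 ≤ n)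
    (sym : ∀ j, 1 ≤ j → j ≤ n - 1 → g j = g (n - j)) :
    ∑ j ∈ Finset.Icc 1 (n - 1), f j * g j
      = ∑ j ∈ Finset.Icc 1 (n - 1), f (n - j) * g j := by
  refine Finset.sum_nbij' (fun j => n - j) (fun j => n - j) ?_ ?_ ?_ ?_ ?_
  · intro a ha; simp only [Finset.mem_Icc] at *; omega
  · intro a ha; simp only [Finset.mem_Icc] at *; omega
  · intro a ha; simp only [Finset.mem_Icc] at ha; omega
  · intro a ha; simp only [Finset.mem_Icc] at ha; omega
  · intro a ha
    simp only [Finset.mem_Icc] at ha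
    have h1 : n - (n - a) = a := by omega
    rw [h1, sym a ha.1 ha.2]

theorem kreweras_pos (h : ℕ → ℕ → ℤ)
    (h11 : h 1 1 = 1)
    (hrec1 : ∀ n, 2 ≤ n → h n 1 = ∑ i ∈ Finset.Icc 1 (n - 1), h (n - 1) i)
    (hrec2 : ∀ n, 2 ≤ n → h n 2 = 2 * h n 1 - h (n - 1) 1)
    (hreck : ∀ n k, 3 ≤ k → k ≤ n →
      h n k = 2 * h n (k - 1) - h n (k - 2) - h (n - 1) (k - 1) - h (n - 1) (k - 2)) :
    ∀ n k, 1 ≤ k → k ≤ n → 0 < h n k := by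
  -- Representation lemma: for n ≥ 2 and 1 ≤ k ≤ n,
  -- h n k = ∑_{j=1}^{n-1} min(k, 2j+1-k) * h (n-1) j.
  have repA : ∀ n, 2 ≤ n → ∀ k, 1 ≤ k → k ≤ n →
      h n k = ∑ j ∈ Finset.Icc 1 (n - 1),
        min (k : ℤ) (2 * j + 1 - k) * h (n - 1) j := by
    intro n hn k
    induction k using Nat.strong_induction_on with
    | _ k ih =>
      intro hk1 hkn
      match k, hk1 with
      | 1, _ =>
        rw [hrec1 n hn]
        refine Finset.sum_congr rfl ?_
        intro j hj
        simp only [Finset.mem_Icc] at hj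
        have : min ((1:ℕ) : ℤ) (2 * j + 1 - (1:ℕ)) = 1 := by
          have : (1:ℤ) ≤ j := by exact_mod_cast hj.1
          omega
        rw [this, one_mul]
      | 2, _ =>
        rw [hrec2 n hn, hrec1 n hn]
        have key : ∀ j ∈ Finset.Icc 1 (n - 1),
            min ((2:ℕ) : ℤ) (2 * j + 1 - (2:ℕ)) * h (n - 1) j
              = 2 * h (n - 1) j - (if j = 1 then (1:ℤ) else 0) * h (n - 1) j := by
          intro j hj
          simp only [Finset.mem_Icc] at hj
          rcases eq_or_ne j 1 with rfl | hne
          · norm_num; ring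
          · have h1 : (1:ℤ) ≤ j := by exact_mod_cast hj.1
            have h2 : (j:ℤ) ≠ 1 := by exact_mod_cast hne
            rw [if_neg hne]
            have : min ((2:ℕ) : ℤ) (2 * j + 1 - (2:ℕ)) = 2 := by push_cast; omega
            rw [this]; ring
        rw [Finset.sum_congr rfl key, Finset.sum_sub_distrib, ← Finset.mul_sum]
        have h1mem : 1 ∈ Finset.Icc 1 (n - 1) := by
          simp only [Finset.mem_Icc]; omega
        simp only [ite_mul, one_mul, zero_mul, Finset.sum_ite_eq', h1mem, if_true]
      | (m + 3), _ =>
        set k := m + 3 with hkdef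
        have hk3 : 3 ≤ k := by omega
        rw [hreck n k hk3 hkn,
          ih (k - 1) (by omega) (by omega) (by omega),
          ih (k - 2) (by omega) (by omega) (by omega)]
        have key : ∀ j ∈ Finset.Icc 1 (n - 1),
            min ((k:ℕ) : ℤ) (2 * j + 1 - (k:ℕ)) * h (n - 1) j
            = 2 * (min (((k-1:ℕ)) : ℤ) (2 * j + 1 - ((k-1:ℕ))) * h (n - 1) j)
              - min (((k-2:ℕ)) : ℤ) (2 * j + 1 - ((k-2:ℕ))) * h (n - 1) j
              - (if j = k - 1 then (1:ℤ) else 0) * h (n - 1) j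
              - (if j = k - 2 then (1:ℤ) else 0) * h (n - 1) j := by
          intro j hj
          have hc1 : (((k - 1 : ℕ)) : ℤ) = (k : ℤ) - 1 := by omega
          have hc2 : (((k - 2 : ℕ)) : ℤ) = (k : ℤ) - 2 := by omega
          rw [hc1, hc2]
          have hcoef : min ((k:ℕ) : ℤ) (2 * j + 1 - (k:ℕ))
              = 2 * min ((k:ℤ) - 1) (2 * j + 1 - ((k:ℤ) - 1))
                - min ((k:ℤ) - 2) (2 * j + 1 - ((k:ℤ) - 2))
                - (if j = k - 1 then (1:ℤ) else 0)
                - (if j = k - 2 then (1:ℤ) else 0) := by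
            split_ifs <;> omega
          rw [hcoef]; ring
        rw [show (∑ j ∈ Finset.Icc 1 (n - 1),
              min ((k:ℕ) : ℤ) (2 * j + 1 - (k:ℕ)) * h (n - 1) j)
            = ∑ j ∈ Finset.Icc 1 (n - 1),
              (2 * (min (((k-1:ℕ)) : ℤ) (2 * j + 1 - ((k-1:ℕ))) * h (n - 1) j)
              - min (((k-2:ℕ)) : ℤ) (2 * j + 1 - ((k-2:ℕ))) * h (n - 1) j
              - (if j = k - 1 then (1:ℤ) else 0) * h (n - 1) j
              - (if j = k - 2 then (1:ℤ) else 0) * h (n - 1) j)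
          from Finset.sum_congr rfl key]
        rw [Finset.sum_sub_distrib, Finset.sum_sub_distrib, Finset.sum_sub_distrib,
          ← Finset.mul_sum]
        have hm1 : (k - 1) ∈ Finset.Icc 1 (n - 1) := by
          simp only [Finset.mem_Icc]; omega
        have hm2 : (k - 2) ∈ Finset.Icc 1 (n - 1) := by
          simp only [Finset.mem_Icc]; omega
        simp only [ite_mul, one_mul, zero_mul, Finset.sum_ite_eq', hm1, hm2, if_true]
  -- Main induction: positivity and symmetry of each row.
  have main : ∀ n, 1 ≤ n →
      (∀ k, 1 ≤ k → k ≤ n → 0 < h n k) ∧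
      (∀ k, 1 ≤ k → k ≤ n → h n k = h n (n + 1 - k)) := by
    intro n hn
    induction n, hn using Nat.le_induction with
    | base =>
      constructor
      · intro k hk1 hk2
        have : k = 1 := by omega
        subst this; rw [h11]; norm_num
      · intro k hk1 hk2
        have : k = 1 := by omega
        subst this; rfl
    | succ n hn ihn =>
      obtain ⟨ihpos, ihsym⟩ := ihn
      have hn2 : 2 ≤ n + 1 := by omega
      have hn1 : n + 1 - 1 = n := by omega
      have sym' : ∀ j, 1 ≤ j → j ≤ (n + 1) - 1 → h ((n+1) - 1) j = h ((n+1) - 1) ((n+1) - j) := by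
        intro j hj1 hj2
        rw [hn1]
        exact ihsym j hj1 (by omega)
      -- Positivity of row n+1
      have pos : ∀ k, 1 ≤ k → k ≤ n + 1 → 0 < h (n+1) k := by
        intro k hk1 hk2
        have e1 := repA (n+1) hn2 k hk1 hk2
        have e2 := kreweras_reflect (h ((n+1) - 1))
          (fun j => min (k : ℤ) (2 * j + 1 - k)) (n+1) hn2 sym'
        have e3 : h (n+1) k = ∑ j ∈ Finset.Icc 1 ((n+1) - 1),
            min (k : ℤ) (2 * ((n+1) - j : ℕ) + 1 - k) * h ((n+1) - 1) j := by
          rw [e1]; exact e2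
        have e4 : 2 * h (n+1) k = ∑ j ∈ Finset.Icc 1 ((n+1) - 1),
            (min (k : ℤ) (2 * j + 1 - k) + min (k : ℤ) (2 * ((n+1) - j : ℕ) + 1 - k))
              * h ((n+1) - 1) j := by
          rw [two_mul]
          nth_rewrite 1 [e1]
          nth_rewrite 1 [e3]
          rw [← Finset.sum_add_distrib]
          refine Finset.sum_congr rfl ?_
          intro j hj; ring
        have hsumpos : 0 < ∑ j ∈ Finset.Icc 1 ((n+1) - 1),
            (min (k : ℤ) (2 * j + 1 - k) + min (k : ℤ) (2 * ((n+1) - j : ℕ) + 1 - k))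
              * h ((n+1) - 1) j := by
          apply Finset.sum_pos
          · intro j hj
            simp only [Finset.mem_Icc] at hj
            have hjpos : 0 < h ((n+1) - 1) j := by
              rw [hn1]; exact ihpos j hj.1 (by omega)
            have hj' : j ≤ n := by omega
            have hcoef : 0 < min (k : ℤ) (2 * j + 1 - k)
                + min (k : ℤ) (2 * ((n+1) - j : ℕ) + 1 - k) := by
              clear hjpos
              omega
            exact mul_pos hcoef hjpos
          · refine ⟨1, ?_⟩
            simp only [Finset.mem_Icc]; omega
        omega
      -- Symmetry of row n+1
      have sym : ∀ k, 1 ≤ k → k ≤ n + 1 → h (n+1) k = h (n+1) (n + 1 + 1 - k) := by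
        intro k hk1 hk2
        have e1 := repA (n+1) hn2 k hk1 hk2
        have e1' := repA (n+1) hn2 (n + 1 + 1 - k) (by omega) (by omega)
        have e2 := kreweras_reflect (h ((n+1) - 1))
          (fun j => min (((n + 1 + 1 - k : ℕ)) : ℤ) (2 * j + 1 - ((n + 1 + 1 - k : ℕ))))
          (n+1) hn2 sym'
        have e0 : (∑ j ∈ Finset.Icc 1 ((n+1) - 1), ((2:ℤ) * j - (n+1)) * h ((n+1) - 1) j) = 0 := by
          have := kreweras_reflect (h ((n+1) - 1))
            (fun j => (2:ℤ) * j - (n+1)) (n+1) hn2 sym'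
          have hneg : ∑ j ∈ Finset.Icc 1 ((n+1) - 1),
              ((2:ℤ) * (((n+1) - j : ℕ)) - (n+1)) * h ((n+1) - 1) j
            = - ∑ j ∈ Finset.Icc 1 ((n+1) - 1), ((2:ℤ) * j - (n+1)) * h ((n+1) - 1) j := by
            rw [← Finset.sum_neg_distrib]
            refine Finset.sum_congr rfl ?_
            intro j hj
            simp only [Finset.mem_Icc] at hj
            have hcast : (((n+1) - j : ℕ) : ℤ) = (n : ℤ) + 1 - j := by omega
            rw [hcast]; ring
          rw [hneg] at this
          linarith
        rw [e1, e1']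
        rw [e2]
        rw [← sub_eq_zero, ← Finset.sum_sub_distrib, ← e0]
        refine Finset.sum_congr rfl ?_
        intro j hj
        simp only [Finset.mem_Icc] at hj
        have hj' : j ≤ n := by omega
        have hd : min ((k:ℕ) : ℤ) (2 * j + 1 - (k:ℕ))
            - min (((n + 1 + 1 - k : ℕ)) : ℤ)
              (2 * (((n+1) - j : ℕ) : ℤ) + 1 - ((n + 1 + 1 - k : ℕ))) = 2 * j - ((n:ℤ)+1) := by
          omega
        linear_combination hd * h (n + 1 - 1) j
      exact ⟨pos, sym⟩
  intro n k hk1 hk2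
  exact (main n (by omega)).1 k hk1 hk2
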